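/- Let Π = (R, CR) be a finite ground CR-program over a set of atoms At, and let τ(Π) be its weak-constraint translation using fresh atoms appl_1, …, appl_N. If S is an answer set of the weak-constraint program τ(Π), then the set X = {r_i ∈ CR : S violates the i-th weak constraint :~ appl_i, B_i} is an abductive support of Π, and the number of weak constraints of τ(Π) violated by S equals the cardinality of X. -/

import Mathlib

/-- A literal is an atom or its classical negation. -/
inductive Lit (α : Type) where
  | pos : α → Lit α
  | neg : α → Lit α
deriving DecidableEq

/-- The atom a literal is formed from. -/
def Lit.atom {α : Type} : Lit α → α
  | .pos a => a
  | .neg a => a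

/-- A set of literals is consistent if it contains no complementary pair. -/
def Consistent {α : Type} (S : Set (Lit α)) : Prop :=
  ∀ a : α, ¬ (Lit.pos a ∈ S ∧ Lit.neg a ∈ S)

/-- A ground rule  l₀ ∨ … ∨ l_m ← l_{m+1}, …, l_k, not l_{k+1}, …, not l_n. -/
structure Rule (α : Type) where
  head : List (Lit α)
  pbody : List (Lit α)
  nbody : List (Lit α)
deriving DecidableEq

/-- `S` satisfies a rule. -/
def Satisfies {α : Type} (S : Set (Lit α)) (r : Rule α) : Prop :=
  ((∀ l ∈ r.pbody, l ∈ S) ∧ (∀ l ∈ r.nbody, l ∉ S)) → ∃ l ∈ r.head, l ∈ S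

/-- The reduct of a ground program relative to `S`. -/
def reduct {α : Type} (P : Set (Rule α)) (S : Set (Lit α)) : Set (Rule α) :=
  {r' | ∃ r ∈ P, (∀ l ∈ r.nbody, l ∉ S) ∧ r' = ⟨r.head, r.pbody, []⟩}

/-- `S` satisfies all rules of `P`. -/
def SatAll {α : Type} (P : Set (Rule α)) (S : Set (Lit α)) : Prop :=
  ∀ r ∈ P, Satisfies S r

/-- `S` is an answer set of the ground program `P`: `S` is consistent and minimal
among consistent sets of literals satisfying all rules of the reduct `P^S`. -/
def IsAnswerSet {α : Type} (P : Set (Rule α)) (S : Set (Lit α)) : Prop :=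
  Consistent S ∧ SatAll (reduct P S) S ∧
    ∀ T, Consistent T → SatAll (reduct P S) T → T ⊆ S → T = S

/-- A cr-rule  l₀ ←⁺ l_1, …, l_k, not l_{k+1}, …, not l_n, with a single literal head. -/
structure CrRule (α : Type) where
  head : Lit α
  pbody : List (Lit α)
  nbody : List (Lit α)
deriving DecidableEq

/-- α(r): the regular rule obtained from a cr-rule by replacing ←⁺ with ←. -/
def CrRule.alpha {α : Type} (r : CrRule α) : Rule α :=
  ⟨[r.head], r.pbody, r.nbody⟩

/-- `X` is an abductive support of the CR-program `(R, CRs)`. -/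
def IsAbductiveSupport {α : Type} [DecidableEq α]
    (R : Finset (Rule α)) (CRs X : Finset (CrRule α)) : Prop :=
  X ⊆ CRs ∧ (∃ S, IsAnswerSet ((R : Set (Rule α)) ∪ ↑(X.image CrRule.alpha)) S) ∧
    ∀ Y ⊆ CRs, (∃ S, IsAnswerSet ((R : Set (Rule α)) ∪ ↑(Y.image CrRule.alpha)) S) → X.card ≤ Y.card

/-- `A` is an answer set of the CR-program `(R, CRs)`. -/
def IsCrAnswerSet {α : Type} [DecidableEq α]
    (R : Finset (Rule α)) (CRs : Finset (CrRule α)) (A : Set (Lit α)) : Prop :=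
  ∃ X, IsAbductiveSupport R CRs X ∧ IsAnswerSet ((R : Set (Rule α)) ∪ ↑(X.image CrRule.alpha)) A

/-- A weak constraint  :~ l_1, …, l_k, not l_{k+1}, …, not l_n. -/
structure WeakConstraint (α : Type) where
  pbody : List (Lit α)
  nbody : List (Lit α)
deriving DecidableEq

/-- `S` violates a weak constraint. -/
def ViolatesWC {α : Type} (S : Set (Lit α)) (w : WeakConstraint α) : Prop :=
  (∀ l ∈ w.pbody, l ∈ S) ∧ (∀ l ∈ w.nbody, l ∉ S)

/-- The number of weak constraints of `W` violated by `S`. -/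
noncomputable def violatedCount {α : Type} (W : Finset (WeakConstraint α))
    (S : Set (Lit α)) : ℕ :=
  {w : WeakConstraint α | w ∈ W ∧ ViolatesWC S w}.ncard

/-- `S` is an answer set of the weak-constraint program `(P, W)`. -/
def IsWcAnswerSet {α : Type} (P : Set (Rule α)) (W : Finset (WeakConstraint α))
    (S : Set (Lit α)) : Prop :=
  IsAnswerSet P S ∧ ∀ T, IsAnswerSet P T → violatedCount W S ≤ violatedCount W T

section Translation

variable {α : Type} [DecidableEq α] {N : ℕ}

/-- Atom `a` occurs in the rule `r`. -/
def OccursInRule (a : α) (r : Rule α) : Prop :=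
  ∃ l ∈ r.head ++ r.pbody ++ r.nbody, l.atom = a

/-- Atom `a` occurs in the cr-rule `r`. -/
def OccursInCrRule (a : α) (r : CrRule α) : Prop :=
  ∃ l ∈ r.head :: (r.pbody ++ r.nbody), l.atom = a

/-- The atoms `appl i` are distinct and fresh: they do not occur in the
CR-program `(R, cr 1, …, cr N)`. -/
def FreshAppl (R : Finset (Rule α)) (cr : Fin N → CrRule α) (appl : Fin N → α) : Prop :=
  Function.Injective appl ∧
    ∀ i : Fin N, (∀ r ∈ R, ¬ OccursInRule (appl i) r) ∧
      (∀ j : Fin N, ¬ OccursInCrRule (appl i) (cr j))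

/-- The rule  appl_i ∨ ¬appl_i ← B_i. -/
def choiceRule (cr : Fin N → CrRule α) (appl : Fin N → α) (i : Fin N) : Rule α :=
  ⟨[Lit.pos (appl i), Lit.neg (appl i)], (cr i).pbody, (cr i).nbody⟩

/-- The rule  h_i ← appl_i, B_i. -/
def applRule (cr : Fin N → CrRule α) (appl : Fin N → α) (i : Fin N) : Rule α :=
  ⟨[(cr i).head], Lit.pos (appl i) :: (cr i).pbody, (cr i).nbody⟩

/-- The hard part of the translation τ(Π). -/
def tauHard (R : Finset (Rule α)) (cr : Fin N → CrRule α) (appl : Fin N → α) :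
    Set (Rule α) :=
  ↑R ∪ Set.range (choiceRule cr appl) ∪ Set.range (applRule cr appl)

/-- The i-th weak constraint  :~ appl_i, B_i  of the translation τ(Π). -/
def wcOf (cr : Fin N → CrRule α) (appl : Fin N → α) (i : Fin N) : WeakConstraint α :=
  ⟨Lit.pos (appl i) :: (cr i).pbody, (cr i).nbody⟩

/-- The set of weak constraints of the translation τ(Π). -/
def tauWeak (cr : Fin N → CrRule α) (appl : Fin N → α) : Finset (WeakConstraint α) :=
  Finset.image (wcOf cr appl) Finset.univ

/-- The literals of `S` not formed from any of the fresh atoms `appl i`. -/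
def restrictAway (appl : Fin N → α) (S : Set (Lit α)) : Set (Lit α) :=
  {l ∈ S | ∀ i : Fin N, l.atom ≠ appl i}

end Translation

section ProofAux
set_option linter.unusedSectionVars false

variable {α : Type} [DecidableEq α] {N : ℕ}

/-- The body of cr-rule `i` is satisfied by `T`. -/
def SatB (cr : Fin N → CrRule α) (T : Set (Lit α)) (i : Fin N) : Prop :=
  (∀ l ∈ (cr i).pbody, l ∈ T) ∧ (∀ l ∈ (cr i).nbody, l ∉ T)

/-- The program `R ∪ α({cr i : i ∈ J})` as a set of rules. -/
def progOf (R : Finset (Rule α)) (cr : Fin N → CrRule α) (J : Set (Fin N)) : Set (Rule α) :=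
  ↑R ∪ {r | ∃ i ∈ J, r = (cr i).alpha}

lemma satAll_reduct_iff {P : Set (Rule α)} {S T : Set (Lit α)} :
    SatAll (reduct P S) T ↔
      ∀ r ∈ P, (∀ l ∈ r.nbody, l ∉ S) → (∀ l ∈ r.pbody, l ∈ T) → ∃ l ∈ r.head, l ∈ T := by
  constructor
  · intro h r hr hn hp
    exact h ⟨r.head, r.pbody, []⟩ ⟨r, hr, hn, rfl⟩ ⟨hp, by simp⟩
  · rintro h r' ⟨r, hr, hn, rfl⟩
    intro ⟨hp, _⟩
    exact h r hr hn hp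

lemma fresh_rule {R : Finset (Rule α)} {cr : Fin N → CrRule α} {appl : Fin N → α}
    (hfresh : FreshAppl R cr appl) {r : Rule α} (hr : r ∈ R) {l : Lit α}
    (hl : l ∈ r.head ∨ l ∈ r.pbody ∨ l ∈ r.nbody) (i : Fin N) : l.atom ≠ appl i := by
  intro h
  exact (hfresh.2 i).1 r hr ⟨l, by simp only [List.mem_append]; tauto, h⟩

lemma fresh_cr {R : Finset (Rule α)} {cr : Fin N → CrRule α} {appl : Fin N → α}
    (hfresh : FreshAppl R cr appl) (j : Fin N) {l : Lit α}
    (hl : l = (cr j).head ∨ l ∈ (cr j).pbody ∨ l ∈ (cr j).nbody) (i : Fin N) :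
    l.atom ≠ appl i := by
  intro h
  exact (hfresh.2 i).2 j ⟨l, by simp only [List.mem_cons, List.mem_append]; tauto, h⟩

lemma mem_tauHard_R {R : Finset (Rule α)} {cr : Fin N → CrRule α} {appl : Fin N → α}
    {r : Rule α} (hr : r ∈ R) : r ∈ tauHard R cr appl :=
  Or.inl (Or.inl hr)

lemma mem_tauHard_choice {R : Finset (Rule α)} {cr : Fin N → CrRule α} {appl : Fin N → α}
    (i : Fin N) : choiceRule cr appl i ∈ tauHard R cr appl :=
  Or.inl (Or.inr ⟨i, rfl⟩)

lemma mem_tauHard_appl {R : Finset (Rule α)} {cr : Fin N → CrRule α} {appl : Fin N → α}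
    (i : Fin N) : applRule cr appl i ∈ tauHard R cr appl :=
  Or.inr ⟨i, rfl⟩

lemma forward {R : Finset (Rule α)} {cr : Fin N → CrRule α} {appl : Fin N → α}
    (hfresh : FreshAppl R cr appl) {S : Set (Lit α)}
    (hS : IsAnswerSet (tauHard R cr appl) S) :
    IsAnswerSet (progOf R cr {i | ViolatesWC S (wcOf cr appl i)}) (restrictAway appl S) := by
  obtain ⟨hScons, hSsat, hSmin⟩ := hS
  rw [satAll_reduct_iff] at hSsat
  have hsub : restrictAway appl S ⊆ S := fun l hl => hl.1
  refine ⟨fun a h => hScons a ⟨h.1.1, h.2.1⟩, ?_, ?_⟩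
  · rw [satAll_reduct_iff]
    rintro r (hr | ⟨i, hi, rfl⟩) hn hp
    · have hn' : ∀ l ∈ r.nbody, l ∉ S := fun l hl hls =>
        hn l hl ⟨hls, fresh_rule hfresh hr (Or.inr (Or.inr hl))⟩
      obtain ⟨l, hlh, hls⟩ := hSsat r (mem_tauHard_R hr) hn' (fun l hl => hsub (hp l hl))
      exact ⟨l, hlh, hls, fresh_rule hfresh hr (Or.inl hlh)⟩
    · obtain ⟨vp, vn⟩ := hi
      have hp' : ∀ l ∈ (applRule cr appl i).pbody, l ∈ S := vp
      refine ⟨(cr i).head, by simp [CrRule.alpha], ?_, fresh_cr hfresh i (Or.inl rfl)⟩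
      have h2 := hSsat (applRule cr appl i) (mem_tauHard_appl i) vn hp'
      simpa [applRule] using h2
  · intro T hTc hTs hTsub
    rw [satAll_reduct_iff] at hTs
    set S₀ := restrictAway appl S with hS0
    set T' := T ∪ (S \ S₀) with hT'
    have hT'S : T' ⊆ S := Set.union_subset (hTsub.trans hsub) Set.diff_subset
    have hT's : SatAll (reduct (tauHard R cr appl) S) T' := by
      rw [satAll_reduct_iff]
      rintro r ((hr | ⟨i, rfl⟩) | ⟨i, rfl⟩) hn hp
      · have hp' : ∀ l ∈ r.pbody, l ∈ T := by
          intro l hl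
          rcases hp l hl with h | h
          · exact h
          · exact absurd ⟨h.1, fresh_rule hfresh hr (Or.inr (Or.inl hl))⟩ h.2
        have hn' : ∀ l ∈ r.nbody, l ∉ S₀ := fun l hl h0 => hn l hl h0.1
        obtain ⟨l, hlh, hls⟩ := hTs r (Or.inl hr) hn' hp'
        exact ⟨l, hlh, Or.inl hls⟩
      · obtain ⟨l, hlh, hls⟩ := hSsat (choiceRule cr appl i) (mem_tauHard_choice i) hn
          (fun l hl => hT'S (hp l hl))
        have hat : l.atom = appl i := by
          simp only [choiceRule, List.mem_cons, List.not_mem_nil, or_false] at hlh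
          rcases hlh with rfl | rfl <;> rfl
        exact ⟨l, hlh, Or.inr ⟨hls, fun h0 => h0.2 i hat⟩⟩
      · have hposT' : Lit.pos (appl i) ∈ T' := hp _ List.mem_cons_self
        have hpbT : ∀ l ∈ (cr i).pbody, l ∈ T := by
          intro l hl
          rcases hp l (List.mem_cons_of_mem _ hl) with h | h
          · exact h
          · exact absurd ⟨h.1, fresh_cr hfresh i (Or.inr (Or.inl hl))⟩ h.2
        have hiI : ViolatesWC S (wcOf cr appl i) := by
          refine ⟨?_, hn⟩
          intro l hl
          exact hT'S (hp l hl)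
        have hn' : ∀ l ∈ ((cr i).alpha).nbody, l ∉ S₀ := fun l hl h0 => hn l hl h0.1
        obtain ⟨l, hlh, hls⟩ := hTs ((cr i).alpha) (Or.inr ⟨i, hiI, rfl⟩) hn' hpbT
        exact ⟨l, hlh, Or.inl hls⟩
    have hT'c : Consistent T' := fun a h => hScons a ⟨hT'S h.1, hT'S h.2⟩
    have hTS : T' = S := hSmin T' hT'c hT's hT'S
    refine Set.Subset.antisymm hTsub ?_
    intro l hl
    have : l ∈ T' := hTS ▸ hl.1
    rcases this with h | h
    · exact h
    · exact absurd hl h.2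

lemma backward {R : Finset (Rule α)} {cr : Fin N → CrRule α} {appl : Fin N → α}
    (hfresh : FreshAppl R cr appl) (J : Set (Fin N)) {T : Set (Lit α)}
    (hT : IsAnswerSet (progOf R cr J) T) :
    ∃ S', IsAnswerSet (tauHard R cr appl) S' ∧
      ∀ i, ViolatesWC S' (wcOf cr appl i) → i ∈ J := by
  obtain ⟨hTcons, hTsat, hTmin⟩ := hT
  rw [satAll_reduct_iff] at hTsat
  have hinj : Function.Injective appl := hfresh.1
  -- T contains no literal over a fresh atom
  have hTF : ∀ l ∈ T, ∀ i, l.atom ≠ appl i := by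
    have hsat0 : SatAll (reduct (progOf R cr J) T) (restrictAway appl T) := by
      rw [satAll_reduct_iff]
      rintro r (hr | ⟨i, hi, rfl⟩) hn hp
      · obtain ⟨l, hlh, hls⟩ := hTsat r (Or.inl hr) hn (fun l hl => (hp l hl).1)
        exact ⟨l, hlh, hls, fresh_rule hfresh hr (Or.inl hlh)⟩
      · refine ⟨(cr i).head, by simp [CrRule.alpha], ?_, fresh_cr hfresh i (Or.inl rfl)⟩
        have h2 := hTsat ((cr i).alpha) (Or.inr ⟨i, hi, rfl⟩) hn (fun l hl => (hp l hl).1)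
        simpa [CrRule.alpha] using h2
    have heq : restrictAway appl T = T :=
      hTmin _ (fun a h => hTcons a ⟨h.1.1, h.2.1⟩) hsat0 (fun l hl => hl.1)
    intro l hl
    have h2 : l ∈ restrictAway appl T := by rw [heq]; exact hl
    exact h2.2
  classical
  set A : Set (Lit α) :=
    {l | ∃ i, SatB cr T i ∧ ((i ∈ J ∧ l = Lit.pos (appl i)) ∨ (i ∉ J ∧ l = Lit.neg (appl i)))}
    with hA
  set S' := T ∪ A with hS'
  have hTS' : T ⊆ S' := Set.subset_union_left
  have mpos : ∀ i, Lit.pos (appl i) ∈ S' ↔ i ∈ J ∧ SatB cr T i := by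
    intro i
    constructor
    · rintro (h | ⟨j, hs, (⟨hj, he⟩ | ⟨hj, he⟩)⟩)
      · exact absurd rfl (hTF _ h i)
      · obtain rfl : i = j := hinj (Lit.pos.inj he)
        exact ⟨hj, hs⟩
      · cases he
    · rintro ⟨hj, hs⟩
      exact Or.inr ⟨i, hs, Or.inl ⟨hj, rfl⟩⟩
  have mneg : ∀ i, Lit.neg (appl i) ∈ S' ↔ i ∉ J ∧ SatB cr T i := by
    intro i
    constructor
    · rintro (h | ⟨j, hs, (⟨hj, he⟩ | ⟨hj, he⟩)⟩)
      · exact absurd rfl (hTF _ h i)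
      · cases he
      · obtain rfl : i = j := hinj (Lit.neg.inj he)
        exact ⟨hj, hs⟩
    · rintro ⟨hj, hs⟩
      exact Or.inr ⟨i, hs, Or.inr ⟨hj, rfl⟩⟩
  have mfr : ∀ l : Lit α, (∀ i, l.atom ≠ appl i) → (l ∈ S' ↔ l ∈ T) := by
    intro l hfr
    constructor
    · rintro (h | ⟨j, hs, (⟨hj, he⟩ | ⟨hj, he⟩)⟩)
      · exact h
      · exact absurd (by rw [he]; rfl) (hfr j)
      · exact absurd (by rw [he]; rfl) (hfr j)
    · exact fun h => hTS' h
  have hcons : Consistent S' := by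
    intro a ⟨hp, hq⟩
    rcases hp with hp | ⟨j, hsj, hj⟩
    · rcases hq with hq | ⟨j, hsj, hj⟩
      · exact hTcons a ⟨hp, hq⟩
      · rcases hj with ⟨_, he⟩ | ⟨_, he⟩
        · cases he
        · obtain rfl : a = appl j := Lit.neg.inj he
          exact hTF _ hp j rfl
    · rcases hj with ⟨hjJ, he⟩ | ⟨_, he⟩
      · obtain rfl : a = appl j := Lit.pos.inj he
        rcases hq with hq | ⟨j', hsj', hj'⟩
        · exact hTF _ hq j rfl
        · rcases hj' with ⟨_, he'⟩ | ⟨hj'J, he'⟩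
          · cases he'
          · obtain rfl : j = j' := hinj (Lit.neg.inj he')
            exact hj'J hjJ
      · cases he
  have hsat : SatAll (reduct (tauHard R cr appl) S') S' := by
    rw [satAll_reduct_iff]
    rintro r ((hr | ⟨i, rfl⟩) | ⟨i, rfl⟩) hn hp
    · have hp' : ∀ l ∈ r.pbody, l ∈ T := fun l hl =>
        (mfr l (fresh_rule hfresh hr (Or.inr (Or.inl hl)))).1 (hp l hl)
      have hn' : ∀ l ∈ r.nbody, l ∉ T := fun l hl h => hn l hl (hTS' h)
      obtain ⟨l, hlh, hls⟩ := hTsat r (Or.inl hr) hn' hp'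
      exact ⟨l, hlh, hTS' hls⟩
    · have hsB : SatB cr T i := by
        constructor
        · exact fun l hl => (mfr l (fresh_cr hfresh i (Or.inr (Or.inl hl)))).1 (hp l hl)
        · exact fun l hl h => hn l hl (hTS' h)
      by_cases hiJ : i ∈ J
      · exact ⟨Lit.pos (appl i), by simp [choiceRule], (mpos i).2 ⟨hiJ, hsB⟩⟩
      · exact ⟨Lit.neg (appl i), by simp [choiceRule], (mneg i).2 ⟨hiJ, hsB⟩⟩
    · have hposS' : Lit.pos (appl i) ∈ S' := hp _ List.mem_cons_self
      obtain ⟨hiJ, hsB⟩ := (mpos i).1 hposS'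
      have hn' : ∀ l ∈ ((cr i).alpha).nbody, l ∉ T := hsB.2
      obtain ⟨l, hlh, hls⟩ := hTsat ((cr i).alpha) (Or.inr ⟨i, hiJ, rfl⟩) hn' hsB.1
      have hl : l = (cr i).head := by simpa [CrRule.alpha] using hlh
      exact ⟨(cr i).head, by simp [applRule], hTS' (hl ▸ hls)⟩
  refine ⟨S', ⟨hcons, hsat, ?_⟩, ?_⟩
  · -- minimality
    intro U hUc hUs hUsub
    rw [satAll_reduct_iff] at hUs
    have hU0T : restrictAway appl U ⊆ T := fun l hl => (mfr l hl.2).1 (hUsub hl.1)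
    have key : ∀ i, SatB cr T i → (∀ l ∈ (cr i).pbody, l ∈ U) →
        (Lit.pos (appl i) ∈ U ∨ Lit.neg (appl i) ∈ U) := by
      intro i hsB hpU
      have hn' : ∀ l ∈ (choiceRule cr appl i).nbody, l ∉ S' := fun l hl h =>
        hsB.2 l hl ((mfr l (fresh_cr hfresh i (Or.inr (Or.inr hl)))).1 h)
      obtain ⟨l, hlh, hls⟩ := hUs (choiceRule cr appl i) (mem_tauHard_choice i) hn' hpU
      simp only [choiceRule, List.mem_cons, List.not_mem_nil, or_false] at hlh
      rcases hlh with rfl | rfl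
      · exact Or.inl hls
      · exact Or.inr hls
    have hU0sat : SatAll (reduct (progOf R cr J) T) (restrictAway appl U) := by
      rw [satAll_reduct_iff]
      rintro r (hr | ⟨i, hiJ, rfl⟩) hn hp
      · have hn' : ∀ l ∈ r.nbody, l ∉ S' := fun l hl h =>
          hn l hl ((mfr l (fresh_rule hfresh hr (Or.inr (Or.inr hl)))).1 h)
        obtain ⟨l, hlh, hls⟩ := hUs r (mem_tauHard_R hr) hn' (fun l hl => (hp l hl).1)
        exact ⟨l, hlh, hls, fresh_rule hfresh hr (Or.inl hlh)⟩
      · have hpU : ∀ l ∈ (cr i).pbody, l ∈ U := fun l hl => (hp l hl).1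
        have hpT : ∀ l ∈ (cr i).pbody, l ∈ T := fun l hl => hU0T (hp l hl)
        have hsB : SatB cr T i := ⟨hpT, hn⟩
        have hposU : Lit.pos (appl i) ∈ U := by
          rcases key i hsB hpU with h | h
          · exact h
          · exact absurd ((mneg i).1 (hUsub h)).1 (fun hni => hni hiJ)
        have hn' : ∀ l ∈ (applRule cr appl i).nbody, l ∉ S' := fun l hl h =>
          hsB.2 l hl ((mfr l (fresh_cr hfresh i (Or.inr (Or.inr hl)))).1 h)
        have hp' : ∀ l ∈ (applRule cr appl i).pbody, l ∈ U := by
          intro l hl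
          rcases List.mem_cons.mp hl with rfl | hl'
          · exact hposU
          · exact hpU l hl'
        have h2 := hUs (applRule cr appl i) (mem_tauHard_appl i) hn' hp'
        have hls : (cr i).head ∈ U := by simpa [applRule] using h2
        exact ⟨(cr i).head, by simp [CrRule.alpha], hls, fresh_cr hfresh i (Or.inl rfl)⟩
    have hU0eq : restrictAway appl U = T :=
      hTmin _ (fun a h => hUc a ⟨h.1.1, h.2.1⟩) hU0sat hU0T
    have hTU : T ⊆ U := fun l hl => ((by rw [hU0eq]; exact hl : l ∈ restrictAway appl U)).1
    refine Set.Subset.antisymm hUsub ?_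
    rintro l (hl | ⟨i, hsB, hi⟩)
    · exact hTU hl
    · have hpU : ∀ l ∈ (cr i).pbody, l ∈ U := fun l hl => hTU (hsB.1 l hl)
      rcases hi with ⟨hiJ, rfl⟩ | ⟨hiJ, rfl⟩
      · rcases key i hsB hpU with h | h
        · exact h
        · exact absurd ((mneg i).1 (hUsub h)).1 (fun hni => hni hiJ)
      · rcases key i hsB hpU with h | h
        · exact absurd ((mpos i).1 (hUsub h)).1 hiJ
        · exact h
  · -- violated constraints come from J
    intro i hv
    exact ((mpos i).1 (hv.1 _ List.mem_cons_self)).1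

open Classical in
lemma count_eq {cr : Fin N → CrRule α} {appl : Fin N → α} (hinj : Function.Injective appl)
    (S : Set (Lit α)) :
    violatedCount (tauWeak cr appl) S =
      (Finset.univ.filter (fun i : Fin N => ViolatesWC S (wcOf cr appl i))).card := by
  have hw : Function.Injective (wcOf cr appl) := by
    intro i j h
    have h1 : Lit.pos (appl i) = Lit.pos (appl j) :=
      ((List.cons.injEq _ _ _ _).mp (congrArg WeakConstraint.pbody h)).1
    exact hinj (Lit.pos.inj h1)
  have hset : {w : WeakConstraint α | w ∈ tauWeak cr appl ∧ ViolatesWC S w} =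
      ↑((Finset.univ.filter
          (fun i : Fin N => ViolatesWC S (wcOf cr appl i))).image (wcOf cr appl)) := by
    ext w
    simp only [Set.mem_setOf_eq, Finset.coe_image, Set.mem_image, Finset.mem_coe,
      Finset.mem_filter, Finset.mem_univ, true_and, tauWeak, Finset.mem_image]
    constructor
    · rintro ⟨⟨i, rfl⟩, hv⟩
      exact ⟨i, hv, rfl⟩
    · rintro ⟨i, hv, rfl⟩
      exact ⟨⟨i, rfl⟩, hv⟩
  rw [violatedCount, hset, Set.ncard_coe_finset, Finset.card_image_of_injective _ hw]

lemma progOf_eq (R : Finset (Rule α)) (cr : Fin N → CrRule α) (Jf : Finset (Fin N)) :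
    ((R : Set (Rule α)) ∪ ↑((Jf.image cr).image CrRule.alpha)) = progOf R cr ↑Jf := by
  ext r
  simp only [progOf, Set.mem_union, Finset.coe_image, Set.mem_image, Finset.mem_coe,
    Finset.mem_image, Set.mem_setOf_eq]
  constructor
  · rintro (h | ⟨c, ⟨i, hi, rfl⟩, rfl⟩)
    · exact Or.inl h
    · exact Or.inr ⟨i, hi, rfl⟩
  · rintro (h | ⟨i, hi, rfl⟩)
    · exact Or.inl h
    · exact Or.inr ⟨cr i, ⟨i, hi, rfl⟩, rfl⟩

end ProofAux

open Classical in
/-- If `S` is an answer set of the weak-constraint translation τ(Π)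
of the finite ground CR-program Π = (R, CR), then
X = {r_i ∈ CR : S violates the i-th weak constraint :~ appl_i, B_i} is an abductive
support of Π, and the number of weak constraints of τ(Π) violated by `S` equals the
cardinality of X. -/
theorem translation_answerSet_violated_is_abductiveSupport
    {α : Type} [DecidableEq α] [Countable α] {N : ℕ}
    (R : Finset (Rule α)) (cr : Fin N → CrRule α) (hcr : Function.Injective cr)
    (appl : Fin N → α) (hfresh : FreshAppl R cr appl)
    (S : Set (Lit α))
    (hS : IsWcAnswerSet (tauHard R cr appl) (tauWeak cr appl) S) :
    IsAbductiveSupport R (Finset.image cr Finset.univ)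
        (Finset.image cr
          (Finset.univ.filter (fun i : Fin N => ViolatesWC S (wcOf cr appl i)))) ∧
      violatedCount (tauWeak cr appl) S =
        (Finset.image cr
          (Finset.univ.filter (fun i : Fin N => ViolatesWC S (wcOf cr appl i)))).card := by
  obtain ⟨hAS, hMin⟩ := hS
  have hinj : Function.Injective appl := hfresh.1
  have countS : violatedCount (tauWeak cr appl) S =
      (Finset.univ.filter (fun i : Fin N => ViolatesWC S (wcOf cr appl i))).card :=
    count_eq hinj S
  have hXcard : (Finset.image cr
      (Finset.univ.filter (fun i : Fin N => ViolatesWC S (wcOf cr appl i)))).card =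
      (Finset.univ.filter (fun i : Fin N => ViolatesWC S (wcOf cr appl i))).card :=
    Finset.card_image_of_injective _ hcr
  constructor
  · refine ⟨Finset.image_subset_image (Finset.filter_subset _ _), ?_, ?_⟩
    · refine ⟨restrictAway appl S, ?_⟩
      have h := forward hfresh hAS
      have e : ((R : Set (Rule α)) ∪
          ↑((Finset.image cr (Finset.univ.filter
            (fun i : Fin N => ViolatesWC S (wcOf cr appl i)))).image CrRule.alpha)) =
          progOf R cr {i | ViolatesWC S (wcOf cr appl i)} := by
        rw [progOf_eq]
        congr 1
        ext i
        simp
      rw [e]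
      exact h
    · intro Y hY hEx
      obtain ⟨T, hT⟩ := hEx
      have hYeq : Y = (Finset.univ.filter (fun i : Fin N => cr i ∈ Y)).image cr := by
        ext r
        simp only [Finset.mem_image, Finset.mem_filter, Finset.mem_univ, true_and]
        constructor
        · intro hr
          obtain ⟨i, -, rfl⟩ := Finset.mem_image.mp (hY hr)
          exact ⟨i, hr, rfl⟩
        · rintro ⟨i, hi, rfl⟩
          exact hi
      have hT' : IsAnswerSet
          (progOf R cr ↑(Finset.univ.filter (fun i : Fin N => cr i ∈ Y))) T := by
        rw [← progOf_eq]
        rw [hYeq] at hT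
        exact hT
      obtain ⟨S', hS'AS, hS'J⟩ := backward hfresh _ hT'
      have h1 : violatedCount (tauWeak cr appl) S ≤ violatedCount (tauWeak cr appl) S' :=
        hMin S' hS'AS
      have h2 : violatedCount (tauWeak cr appl) S' ≤
          (Finset.univ.filter (fun i : Fin N => cr i ∈ Y)).card := by
        rw [count_eq hinj S']
        apply Finset.card_le_card
        intro i hi
        simp only [Finset.mem_filter, Finset.mem_univ, true_and] at hi ⊢
        simpa using hS'J i hi
      have h3 : (Finset.univ.filter (fun i : Fin N => cr i ∈ Y)).card = Y.card := by
        conv_rhs => rw [hYeq]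
        rw [Finset.card_image_of_injective _ hcr]
      rw [hXcard.symm] at countS
      omega
  · rw [countS, hXcard]
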